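/- Let A be an n×n real Metzler matrix (all off-diagonal entries nonnegative) that is irreducible, in the sense that there exist a real number r and a positive integer m such that every entry of (r·I + A)^m is strictly positive. Suppose in addition that every column of A sums to zero. Then 0 is an eigenvalue of A (with left eigenvector the all-ones row vector), and every complex eigenvalue μ of A with μ ≠ 0 satisfies Re μ < 0. -/

import Mathlib

open Matrix Polynomial

/-- If `μ` is a root of the characteristic polynomial of `B`, then `μ • 1 - B` is singular. -/
lemma det_diagonal_sub_eq_zero_of_isRoot {n : ℕ} (B : Matrix (Fin n) (Fin n) ℂ) (μ : ℂ)
    (h : B.charpoly.IsRoot μ) : (Matrix.diagonal (fun _ => μ) - B).det = 0 := by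
  have hmap := RingHom.map_det (Polynomial.evalRingHom μ) (charmatrix B)
  have hM : ((Polynomial.evalRingHom μ).mapMatrix (charmatrix B) : Matrix (Fin n) (Fin n) ℂ)
      = Matrix.diagonal (fun _ => μ) - B := by
    ext i j
    by_cases hij : i = j <;> simp [charmatrix_apply, Matrix.diagonal, hij]
  rw [hM] at hmap
  rw [← hmap]
  exact h

/-- An irreducible Metzler matrix whose columns all sum to zero has `0` as an
eigenvalue, with left eigenvector the all-ones row vector, and every other complex
eigenvalue has strictly negative real part. -/
theorem metzler_zero_column_sums_spectrum {n : ℕ} (hn : 0 < n)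
    (A : Matrix (Fin n) (Fin n) ℝ)
    (hMetzler : ∀ i j, i ≠ j → 0 ≤ A i j)
    (hirr : ∃ (r : ℝ) (m : ℕ), 0 < m ∧
      ∀ i j, 0 < ((r • (1 : Matrix (Fin n) (Fin n) ℝ) + A) ^ m) i j)
    (hcols : ∀ j, ∑ i, A i j = 0) :
    Matrix.vecMul (fun _ => (1 : ℝ)) A = 0 ∧
    A.charpoly.IsRoot 0 ∧
    (∀ μ : ℂ, (A.charpoly.map (algebraMap ℝ ℂ)).IsRoot μ → μ ≠ 0 → μ.re < 0) := by
  have h1 : Matrix.vecMul (fun _ => (1 : ℝ)) A = 0 := by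
    funext j
    simpa [Matrix.vecMul, dotProduct] using hcols j
  have hdet : A.det = 0 := by
    rw [← Matrix.exists_vecMul_eq_zero_iff]
    refine ⟨fun _ => 1, ?_, h1⟩
    intro h
    have := congrFun h ⟨0, hn⟩
    simpa using this
  refine ⟨h1, ?_, ?_⟩
  · -- 0 is a root of the char poly
    have hc := Matrix.det_eq_sign_charpoly_coeff A
    rw [hdet] at hc
    have hcoeff : A.charpoly.coeff 0 = 0 := by
      rcases mul_eq_zero.1 hc.symm with h | h
      · exact absurd h (by positivity)
      · exact h
    rwa [Polynomial.IsRoot, ← Polynomial.coeff_zero_eq_eval_zero]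
  · intro μ hroot hμ
    set B : Matrix (Fin n) (Fin n) ℂ := A.map (algebraMap ℝ ℂ) with hB
    have hroot' : B.charpoly.IsRoot μ := by
      rwa [hB, Matrix.charpoly_map]
    have hdet0 := det_diagonal_sub_eq_zero_of_isRoot B μ hroot'
    -- pass to transpose to get a column eigenvector relation
    have hdetT : ((Matrix.diagonal (fun _ => μ) - B)ᵀ).det = 0 := by
      rwa [Matrix.det_transpose]
    obtain ⟨v, hv, hvz⟩ := Matrix.exists_mulVec_eq_zero_iff.2 hdetT
    -- the eigenvector equation: for all i, ∑ j, B j i * v j = μ * v i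
    have heig : ∀ i, ∑ j, (A j i : ℂ) * v j = μ * v i := by
      intro i
      have := congrFun hvz i
      simp only [Matrix.mulVec, dotProduct, Matrix.transpose_apply,
        Matrix.sub_apply, Matrix.diagonal_apply, sub_mul, Finset.sum_sub_distrib,
        Pi.zero_apply] at this
      have hd : ∑ j, (if j = i then μ else 0) * v j = μ * v i := by
        rw [Finset.sum_eq_single i] <;> simp (config := {contextual := true})
      rw [hd] at this
      have : μ * v i - ∑ j, B j i * v j = 0 := by linear_combination this
      have h2 : ∑ j, B j i * v j = μ * v i := by linear_combination -this
      simpa [hB, Matrix.map_apply] using h2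
    -- pick index maximizing |v i|
    obtain ⟨i0, _, hmax⟩ := Finset.exists_max_image Finset.univ
      (fun j => ‖v j‖) ⟨⟨0, hn⟩, Finset.mem_univ _⟩
    have hmax' : ∀ j, ‖v j‖ ≤ ‖v i0‖ :=
      fun j => hmax j (Finset.mem_univ j)
    have hvpos : 0 < ‖v i0‖ := by
      obtain ⟨k, hk⟩ := Function.ne_iff.1 hv
      exact lt_of_lt_of_le (by simpa using hk) (hmax' k)
    set c : ℝ := A i0 i0 with hc
    -- c ≤ 0 and off-diagonal column sum = -c
    have hsum : ∑ j ∈ Finset.univ.erase i0, A j i0 = -c := by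
      have := hcols i0
      have h0 : A i0 i0 + ∑ j ∈ Finset.univ.erase i0, A j i0 = 0 := by
        rw [← Finset.add_sum_erase _ _ (Finset.mem_univ i0)] at this
        exact this
      linarith
    have hcle : c ≤ 0 := by
      have : 0 ≤ ∑ j ∈ Finset.univ.erase i0, A j i0 :=
        Finset.sum_nonneg fun j hj => hMetzler j i0 (Finset.ne_of_mem_erase hj)
      linarith [hsum ▸ this]
    -- (μ - c) * v i0 = ∑_{j ≠ i0} A j i0 * v j
    have hkey : (μ - (c : ℂ)) * v i0 = ∑ j ∈ Finset.univ.erase i0, (A j i0 : ℂ) * v j := by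
      have := heig i0
      rw [← Finset.add_sum_erase _ _ (Finset.mem_univ i0)] at this
      ring_nf
      linear_combination -this
    -- Gershgorin estimate: |μ - c| ≤ -c
    have habs : ‖μ - (c : ℂ)‖ * ‖v i0‖ ≤ (-c) * ‖v i0‖ := by
      calc ‖μ - (c : ℂ)‖ * ‖v i0‖
          = ‖(μ - (c : ℂ)) * v i0‖ := (norm_mul _ _).symm
        _ = ‖∑ j ∈ Finset.univ.erase i0, (A j i0 : ℂ) * v j‖ := by rw [hkey]
        _ ≤ ∑ j ∈ Finset.univ.erase i0, ‖(A j i0 : ℂ) * v j‖ :=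
            norm_sum_le _ _
        _ ≤ ∑ j ∈ Finset.univ.erase i0, A j i0 * ‖v i0‖ := by
            refine Finset.sum_le_sum fun j hj => ?_
            rw [norm_mul, Complex.norm_real, Real.norm_eq_abs, abs_of_nonneg (hMetzler j i0 (Finset.ne_of_mem_erase hj))]
            exact mul_le_mul_of_nonneg_left (hmax' j) (hMetzler j i0 (Finset.ne_of_mem_erase hj))
        _ = (-c) * ‖v i0‖ := by rw [← Finset.sum_mul, hsum]
    have hball : ‖μ - (c : ℂ)‖ ≤ -c := le_of_mul_le_mul_right habs hvpos
    -- conclude Re μ < 0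
    by_contra hre
    push_neg at hre
    have hsq : Complex.normSq (μ - (c : ℂ)) ≤ c ^ 2 := by
      have h0 : (0:ℝ) ≤ ‖μ - (c : ℂ)‖ := norm_nonneg _
      calc Complex.normSq (μ - (c : ℂ)) = ‖μ - (c : ℂ)‖ ^ 2 := by
            rw [Complex.sq_norm]
        _ ≤ (-c) ^ 2 := by nlinarith
        _ = c ^ 2 := by ring
    have hnsq : Complex.normSq (μ - (c : ℂ)) = (μ.re - c) ^ 2 + μ.im ^ 2 := by
      simp [Complex.normSq_apply, Complex.sub_re, Complex.sub_im]
      ring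
    have hμsq : μ.re ^ 2 + μ.im ^ 2 ≤ 2 * c * μ.re := by nlinarith [hnsq ▸ hsq]
    have : Complex.normSq μ = 0 := by
      have h2 : Complex.normSq μ = μ.re ^ 2 + μ.im ^ 2 := by
        simp [Complex.normSq_apply]; ring
      nlinarith [Complex.normSq_nonneg μ, mul_nonneg hre (neg_nonneg.2 hcle)]
    exact hμ (Complex.normSq_eq_zero.1 this)
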